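/- There exists a unitary 2ⁿ×2ⁿ matrix U with U X₁ U† = X^{⊗n}; consequently the centralizer of X^{⊗n} in su(2ⁿ), modulo the span of i·X^{⊗n}, is isomorphic to su(2^{n−1}) ⊕ su(2^{n−1}). -/

import Mathlib

open Matrix

noncomputable def pauli : Fin 4 → Matrix (Fin 2) (Fin 2) ℂ :=
  ![1, !![0, 1; 1, 0], !![0, -Complex.I; Complex.I, 0], !![1, 0; 0, -1]]

noncomputable def pauliString {n : ℕ} (s : Fin n → Fin 4) :
    Matrix (Fin n → Fin 2) (Fin n → Fin 2) ℂ :=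
  Matrix.of fun v w => ∏ j, pauli (s j) (v j) (w j)

def PauliStrings (n : ℕ) : Set (Matrix (Fin n → Fin 2) (Fin n → Fin 2) ℂ) :=
  Set.range (pauliString (n := n))


noncomputable def Hm : Matrix (Fin 2) (Fin 2) ℂ := (Real.sqrt 2 : ℂ)⁻¹ • !![1,1;1,-1]

lemma sqrt2_sq : (Real.sqrt 2 : ℂ) * (Real.sqrt 2 : ℂ) = 2 := by
  rw [← Complex.ofReal_mul, Real.mul_self_sqrt (by norm_num)]
  norm_num

lemma sqrt2_sq' : (Real.sqrt 2 : ℂ) ^ 2 = 2 := by rw [sq, sqrt2_sq]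

lemma Hm_mul_Hm : Hm * Hm = 1 := by
  ext i j
  fin_cases i <;> fin_cases j <;>
    simp [Hm, Matrix.mul_apply, Fin.sum_univ_two, Matrix.one_apply] <;>
    field_simp <;> rw [sqrt2_sq'] <;> ring

lemma Hm_X_Hm : Hm * pauli 1 * Hm = pauli 3 := by
  ext i j
  fin_cases i <;> fin_cases j <;>
    simp [Hm, pauli, Matrix.mul_apply, Fin.sum_univ_two] <;>
    field_simp <;> try rw [sqrt2_sq'] <;> ring

lemma Hm_conj (a b : Fin 2) : (starRingEnd ℂ) (Hm a b) = Hm b a := by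
  fin_cases a <;> fin_cases b <;>
    simp [Hm, map_inv₀, Complex.conj_ofReal]

noncomputable def prodMat {n : ℕ} (a : Fin n → Matrix (Fin 2) (Fin 2) ℂ) :
    Matrix (Fin n → Fin 2) (Fin n → Fin 2) ℂ :=
  Matrix.of fun v w => ∏ j, a j (v j) (w j)

lemma prodMat_mul {n : ℕ} (a b : Fin n → Matrix (Fin 2) (Fin 2) ℂ) :
    prodMat a * prodMat b = prodMat (fun j => a j * b j) := by
  ext v w
  simp only [prodMat, Matrix.mul_apply, Matrix.of_apply]
  rw [Finset.prod_univ_sum]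
  simp [Fintype.piFinset_univ, Finset.prod_mul_distrib]

lemma prodMat_one {n : ℕ} : prodMat (fun _ : Fin n => (1 : Matrix (Fin 2) (Fin 2) ℂ)) = 1 := by
  ext v w
  simp only [prodMat, Matrix.of_apply, Matrix.one_apply]
  rw [Fintype.prod_boole]
  simp [funext_iff, eq_comm]

noncomputable def zc : Fin 2 → ℂ := fun x => if x = 0 then 1 else -1

lemma zc_add (a b : Fin 2) : zc (a + b) = zc a * zc b := by
  fin_cases a <;> fin_cases b <;> norm_num [zc] <;> rfl

lemma prod_zc {k : ℕ} (f : Fin k → Fin 2) : ∏ j, zc (f j) = zc (∑ j, f j) := by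
  induction k with
  | zero => simp [zc]
  | succ k ih => rw [Fin.prod_univ_succ, Fin.sum_univ_succ, ih, ← zc_add]

lemma zc_star (a : Fin 2) : star (zc a) = zc a := by
  fin_cases a <;> simp [zc]

lemma pauli3_apply (a b : Fin 2) : pauli 3 a b = if a = b then zc a else 0 := by
  fin_cases a <;> fin_cases b <;> simp [pauli, zc]

lemma fin2_add_add : ∀ a b : Fin 2, a + b + b = a := by decide

def hEquiv (m : ℕ) : Fin 2 × (Fin m → Fin 2) ≃ (Fin (m+1) → Fin 2) where
  toFun p := Fin.cons (p.1 + ∑ j, p.2 j) p.2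
  invFun v := (∑ j, v j, Fin.tail v)
  left_inv p := by
    obtain ⟨s, t⟩ := p
    have h1 : ∑ j, (Fin.cons (s + ∑ j, t j) t : Fin (m+1) → Fin 2) j = s := by
      rw [Fin.sum_univ_succ]
      simp only [Fin.cons_zero, Fin.cons_succ]
      exact fin2_add_add s _
    simp only
    rw [Prod.ext_iff]
    exact ⟨h1, by simp [Fin.tail_cons]⟩
  right_inv v := by
    simp only
    have hs : ∑ j, v j = v 0 + ∑ j : Fin m, Fin.tail v j := by
      rw [Fin.sum_univ_succ]; rfl
    rw [hs, fin2_add_add, Fin.cons_self_tail]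

lemma hEquiv_sum (m : ℕ) (s : Fin 2) (t : Fin m → Fin 2) :
    ∑ j, hEquiv m (s, t) j = s := by
  show ∑ j, (Fin.cons (s + ∑ j, t j) t : Fin (m+1) → Fin 2) j = s
  rw [Fin.sum_univ_succ]
  simp only [Fin.cons_zero, Fin.cons_succ]
  exact fin2_add_add s _

noncomputable def eeEquiv (m : ℕ) : (Fin (2^m) × Fin 2) ≃ (Fin (m+1) → Fin 2) :=
  (Equiv.prodComm _ _).trans
    ((Equiv.prodCongr (Equiv.refl (Fin 2))
      ((Fintype.equivFinOfCardEq
        (by simp [Fintype.card_fun] : Fintype.card (Fin m → Fin 2) = 2^m)).symm)).trans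
      (hEquiv m))

lemma eeEquiv_sum (m : ℕ) (k : Fin (2^m)) (s : Fin 2) :
    ∑ j, eeEquiv m (k, s) j = s := by
  simp only [eeEquiv, Equiv.trans_apply, Equiv.prodComm_apply, Prod.swap_prod_mk,
    Equiv.prodCongr_apply, Equiv.coe_refl, Prod.map]
  exact hEquiv_sum m s _

section Part2

variable (m : ℕ)

local notation "II" => Fin (m+1) → Fin 2
local notation "JJ" => Fin (2^m) × Fin 2
local notation "Md" => Matrix (Fin (2^m)) (Fin (2^m)) ℂ

lemma part2 (m : ℕ) :
    ∃ Ψ : (Matrix (Fin (2^m)) (Fin (2^m)) ℂ × Matrix (Fin (2^m)) (Fin (2^m)) ℂ) →ₗ[ℝ]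
            Matrix (Fin (m+1) → Fin 2) (Fin (m+1) → Fin 2) ℂ,
      (∀ p q : Matrix (Fin (2^m)) (Fin (2^m)) ℂ × Matrix (Fin (2^m)) (Fin (2^m)) ℂ,
          (p.1ᴴ = -p.1 ∧ p.1.trace = 0) → (p.2ᴴ = -p.2 ∧ p.2.trace = 0) →
          (q.1ᴴ = -q.1 ∧ q.1.trace = 0) → (q.2ᴴ = -q.2 ∧ q.2.trace = 0) →
          Ψ ⁅p, q⁆ = ⁅Ψ p, Ψ q⁆) ∧
      (∀ (p : Matrix (Fin (2^m)) (Fin (2^m)) ℂ × Matrix (Fin (2^m)) (Fin (2^m)) ℂ) (t : ℝ),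
          (p.1ᴴ = -p.1 ∧ p.1.trace = 0) → (p.2ᴴ = -p.2 ∧ p.2.trace = 0) →
          Ψ p + t • (Complex.I • pauliString (fun _ : Fin (m+1) => (1 : Fin 4))) = 0 →
          p = 0 ∧ t = 0) ∧
      (∀ M : Matrix (Fin (m+1) → Fin 2) (Fin (m+1) → Fin 2) ℂ,
          ((Mᴴ = -M ∧ M.trace = 0) ∧
              pauliString (fun _ : Fin (m+1) => (1 : Fin 4)) * M =
                M * pauliString (fun _ : Fin (m+1) => (1 : Fin 4))) ↔
            ∃ (p : Matrix (Fin (2^m)) (Fin (2^m)) ℂ × Matrix (Fin (2^m)) (Fin (2^m)) ℂ) (t : ℝ),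
              (p.1ᴴ = -p.1 ∧ p.1.trace = 0) ∧ (p.2ᴴ = -p.2 ∧ p.2.trace = 0) ∧
              M = Ψ p + t • (Complex.I • pauliString (fun _ : Fin (m+1) => (1 : Fin 4)))) := by

  classical
  set ee := eeEquiv m with heedef
  set W : Matrix (Fin (m+1) → Fin 2) (Fin (m+1) → Fin 2) ℂ := prodMat (fun _ => Hm) with hWdef
  set P := pauliString (fun _ : Fin (m+1) => (1 : Fin 4)) with hPdef
  set D := pauliString (fun _ : Fin (m+1) => (3 : Fin 4)) with hDdef
  set χ : (Fin (m+1) → Fin 2) → ℂ := fun v => zc (∑ j, v j) with hχdef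
  have hW2 : W * W = 1 := by
    rw [hWdef, prodMat_mul]
    simp only [Hm_mul_Hm]
    exact prodMat_one
  have hWH : Wᴴ = W := by
    ext v w
    simp only [conjTranspose_apply, hWdef, prodMat, Matrix.of_apply]
    rw [show star (∏ j, Hm (w j) (v j)) = ∏ j, (starRingEnd ℂ) (Hm (w j) (v j)) from
      map_prod (starRingEnd ℂ) _ _]
    simp [Hm_conj]
  have hWPW : W * P * W = D := by
    rw [hPdef, show pauliString (fun _ : Fin (m+1) => (1 : Fin 4)) = prodMat (fun _ => pauli 1)
      from rfl, hWdef, prodMat_mul, prodMat_mul]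
    rw [show (fun j : Fin (m+1) => Hm * pauli 1 * Hm) = fun _ => pauli 3 from
      funext fun _ => Hm_X_Hm]
    rfl
  have hPWDW : P = W * D * W := by
    calc P = (W * W) * P * (W * W) := by rw [hW2, one_mul, mul_one]
    _ = W * (W * P * W) * W := by simp only [mul_assoc]
    _ = W * D * W := by rw [hWPW]
  have hDdiag : D = Matrix.diagonal χ := by
    ext v w
    by_cases h : v = w
    · subst h
      simp only [hDdef, pauliString, Matrix.of_apply, Matrix.diagonal_apply_eq]
      calc ∏ j, pauli 3 (v j) (v j) = ∏ j, zc (v j) := by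
            refine Finset.prod_congr rfl fun j _ => ?_
            rw [pauli3_apply, if_pos rfl]
      _ = χ v := prod_zc v
    · rw [Matrix.diagonal_apply_ne _ h]
      obtain ⟨j, hj⟩ : ∃ j, v j ≠ w j := by
        by_contra hall
        push_neg at hall
        exact h (funext hall)
      simp only [hDdef, pauliString, Matrix.of_apply]
      exact Finset.prod_eq_zero (Finset.mem_univ j) (by rw [pauli3_apply, if_neg hj])
  -- conjugation by W
  set c : Matrix (Fin (m+1) → Fin 2) (Fin (m+1) → Fin 2) ℂ →
      Matrix (Fin (m+1) → Fin 2) (Fin (m+1) → Fin 2) ℂ := fun A => W * A * W with hcdef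
  have hc_mul : ∀ A B, c A * c B = c (A * B) := by
    intro A B
    show (W * A * W) * (W * B * W) = W * (A * B) * W
    simp only [mul_assoc]
    rw [← mul_assoc W W (B * W), hW2, one_mul]
  have hc_c : ∀ A, c (c A) = A := by
    intro A
    show W * (W * A * W) * W = A
    simp only [mul_assoc]
    rw [hW2, mul_one, ← mul_assoc, hW2, one_mul]
  have hc_conj : ∀ A, (c A)ᴴ = c Aᴴ := by
    intro A
    show (W * A * W)ᴴ = W * Aᴴ * W
    rw [conjTranspose_mul, conjTranspose_mul, hWH, ← mul_assoc]
  have hc_trace : ∀ A, (c A).trace = A.trace := by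
    intro A
    show (W * A * W).trace = A.trace
    rw [trace_mul_comm, ← mul_assoc, hW2, one_mul]
  have hc_smul : ∀ (z : ℂ) A, c (z • A) = z • c A := by
    intro z A
    show W * (z • A) * W = z • (W * A * W)
    rw [Matrix.mul_smul, Matrix.smul_mul]
  have hc_smulR : ∀ (r : ℝ) A, c (r • A) = r • c A := by
    intro r A
    show W * (r • A) * W = r • (W * A * W)
    rw [Matrix.mul_smul, Matrix.smul_mul]
  have hc_add : ∀ A B, c (A + B) = c A + c B := by
    intro A B
    show W * (A + B) * W = W * A * W + W * B * W
    rw [Matrix.mul_add, Matrix.add_mul]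
  have hc_neg : ∀ A, c (-A) = -(c A) := by
    intro A
    show W * (-A) * W = -(W * A * W)
    rw [Matrix.mul_neg, Matrix.neg_mul]
  have hc_inj : ∀ A B, c A = c B → A = B := fun A B h => by rw [← hc_c A, h, hc_c]
  -- submatrix transport
  set sub : Matrix (Fin (2^m) × Fin 2) (Fin (2^m) × Fin 2) ℂ →
      Matrix (Fin (m+1) → Fin 2) (Fin (m+1) → Fin 2) ℂ :=
    fun M => M.submatrix ee.symm ee.symm with hsubdef
  have hsub_mul : ∀ M N, sub M * sub N = sub (M * N) := fun M N =>
    Matrix.submatrix_mul_equiv M N _ ee.symm _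
  have hsub_conj : ∀ M, (sub M)ᴴ = sub Mᴴ := fun M => by
    simp [hsubdef]
  have hsub_trace : ∀ M, (sub M).trace = M.trace := by
    intro M
    exact Fintype.sum_equiv ee.symm _ _ fun i => rfl
  have hsub_undo : ∀ N : Matrix (Fin (m+1) → Fin 2) (Fin (m+1) → Fin 2) ℂ,
      sub (N.submatrix ee ee) = N := by
    intro N
    simp [hsubdef, Matrix.submatrix_submatrix, Equiv.self_comp_symm]
  have hsub_inj : ∀ M N, sub M = sub N → M = N := by
    intro M N h
    have h2 := congrArg (fun X => Matrix.submatrix X ee ee) h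
    simpa [hsubdef, Matrix.submatrix_submatrix, Equiv.symm_comp_self] using h2
  have hsub_add : ∀ M N, sub (M + N) = sub M + sub N := by
    intro M N; ext i j; simp [hsubdef]
  have hsub_neg : ∀ M, sub (-M) = -(sub M) := by
    intro M; ext i j; simp [hsubdef]
  have hsub_smul : ∀ (z : ℂ) M, sub (z • M) = z • sub M := by
    intro z M; ext i j; simp [hsubdef]
  have hsub_smulR : ∀ (r : ℝ) M, sub (r • M) = r • sub M := by
    intro r M; ext i j; simp [hsubdef]
  -- blocks
  set bb : (Matrix (Fin (2^m)) (Fin (2^m)) ℂ × Matrix (Fin (2^m)) (Fin (2^m)) ℂ) →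
      Matrix (Fin (2^m) × Fin 2) (Fin (2^m) × Fin 2) ℂ :=
    fun p => Matrix.blockDiagonal ![p.1, p.2] with hbbdef
  have hχee : ∀ (k : Fin (2^m)) (s : Fin 2), χ (ee (k, s)) = zc s := by
    intro k s
    show zc (∑ j, ee (k, s) j) = zc s
    rw [heedef, eeEquiv_sum]
  have hDblock : D.submatrix ee ee =
      Matrix.blockDiagonal ![(1 : Matrix (Fin (2^m)) (Fin (2^m)) ℂ), -1] := by
    ext ⟨k, s⟩ ⟨k', s'⟩
    rw [Matrix.submatrix_apply, hDdiag, Matrix.blockDiagonal_apply]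
    by_cases hss : s = s'
    · subst hss
      rw [if_pos rfl]
      by_cases hkk : k = k'
      · subst hkk
        rw [Matrix.diagonal_apply_eq, hχee]
        fin_cases s <;> simp [zc]
      · rw [Matrix.diagonal_apply_ne]
        · fin_cases s <;> simp [Matrix.one_apply_ne hkk]
        · intro hc
          exact hkk (congrArg Prod.fst (ee.injective hc))
    · rw [if_neg hss, Matrix.diagonal_apply_ne]
      intro hc
      exact hss (congrArg Prod.snd (ee.injective hc))
  have hDsub : D = sub (Matrix.blockDiagonal ![(1 : Matrix (Fin (2^m)) (Fin (2^m)) ℂ), -1]) := by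
    rw [← hDblock, hsub_undo]
  have hPc : P = c (sub (Matrix.blockDiagonal ![(1 : Matrix (Fin (2^m)) (Fin (2^m)) ℂ), -1])) := by
    rw [hPWDW, hDsub]
  -- bb lemmas
  have hbb_mul : ∀ p q, bb p * bb q = bb (p.1 * q.1, p.2 * q.2) := by
    intro p q
    show Matrix.blockDiagonal ![p.1, p.2] * Matrix.blockDiagonal ![q.1, q.2]
      = Matrix.blockDiagonal ![p.1 * q.1, p.2 * q.2]
    rw [show (![p.1 * q.1, p.2 * q.2] : Fin 2 → Matrix (Fin (2^m)) (Fin (2^m)) ℂ)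
      = fun k => ![p.1, p.2] k * ![q.1, q.2] k from by
        funext s'; fin_cases s' <;> simp]
    rw [Matrix.blockDiagonal_mul]
  have hbb_add : ∀ p q, bb (p + q) = bb p + bb q := by
    intro p q
    show Matrix.blockDiagonal ![(p + q).1, (p + q).2]
      = Matrix.blockDiagonal ![p.1, p.2] + Matrix.blockDiagonal ![q.1, q.2]
    rw [show (![(p + q).1, (p + q).2] : Fin 2 → Matrix (Fin (2^m)) (Fin (2^m)) ℂ)
      = ![p.1, p.2] + ![q.1, q.2] from by
        funext s'; fin_cases s' <;> rfl]
    rw [Matrix.blockDiagonal_add]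
  have hbb_smulR : ∀ (r : ℝ) p, bb (r • p) = r • bb p := by
    intro r p
    show Matrix.blockDiagonal ![(r • p).1, (r • p).2] = r • Matrix.blockDiagonal ![p.1, p.2]
    rw [show (![(r • p).1, (r • p).2] : Fin 2 → Matrix (Fin (2^m)) (Fin (2^m)) ℂ)
      = r • ![p.1, p.2] from by
        funext s'; fin_cases s' <;> rfl]
    rw [Matrix.blockDiagonal_smul]
  have hbb_conj : ∀ p, (bb p)ᴴ = bb (p.1ᴴ, p.2ᴴ) := by
    intro p
    show (Matrix.blockDiagonal ![p.1, p.2])ᴴ = Matrix.blockDiagonal ![p.1ᴴ, p.2ᴴ]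
    rw [Matrix.blockDiagonal_conjTranspose,
      show (fun k => ((![p.1, p.2] : Fin 2 → Matrix (Fin (2^m)) (Fin (2^m)) ℂ) k)ᴴ)
        = ![p.1ᴴ, p.2ᴴ] from by funext s'; fin_cases s' <;> rfl]
  have hbb_neg : ∀ p, bb (-p) = -(bb p) := by
    intro p
    show Matrix.blockDiagonal ![(-p).1, (-p).2] = -Matrix.blockDiagonal ![p.1, p.2]
    rw [show (![(-p).1, (-p).2] : Fin 2 → Matrix (Fin (2^m)) (Fin (2^m)) ℂ)
      = -![p.1, p.2] from by
        funext s'; fin_cases s' <;> rfl]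
    rw [Matrix.blockDiagonal_neg]
  have hbb_trace : ∀ p, (bb p).trace = p.1.trace + p.2.trace := by
    intro p
    show (Matrix.blockDiagonal _).trace = _
    rw [Matrix.trace_blockDiagonal, Fin.sum_univ_two]
    rfl
  have hbb_inj : ∀ p q, bb p = bb q → p = q := by
    intro p q h
    have h2 := Matrix.blockDiagonal_injective h
    have h0 := congrFun h2 0
    have h1 := congrFun h2 1
    simp only [Matrix.cons_val_zero, Matrix.cons_val_one, Matrix.head_cons] at h0 h1
    exact Prod.ext h0 h1
  -- the map
  set Ψ₀ : (Matrix (Fin (2^m)) (Fin (2^m)) ℂ × Matrix (Fin (2^m)) (Fin (2^m)) ℂ) →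
      Matrix (Fin (m+1) → Fin 2) (Fin (m+1) → Fin 2) ℂ := fun p => c (sub (bb p)) with hΨ₀def
  have hΨmul : ∀ p q, Ψ₀ p * Ψ₀ q = Ψ₀ (p.1 * q.1, p.2 * q.2) := by
    intro p q
    rw [hΨ₀def]
    simp only
    rw [hc_mul, hsub_mul, hbb_mul]
  have hΨconj : ∀ p, (Ψ₀ p)ᴴ = Ψ₀ (p.1ᴴ, p.2ᴴ) := by
    intro p
    rw [hΨ₀def]
    simp only
    rw [hc_conj, hsub_conj, hbb_conj]
  have hΨtrace : ∀ p, (Ψ₀ p).trace = p.1.trace + p.2.trace := by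
    intro p
    rw [hΨ₀def]
    simp only
    rw [hc_trace, hsub_trace, hbb_trace]
  have hΨinj : ∀ p q, Ψ₀ p = Ψ₀ q → p = q := by
    intro p q h
    rw [hΨ₀def] at h
    exact hbb_inj _ _ (hsub_inj _ _ (hc_inj _ _ h))
  have hΨneg : ∀ p, Ψ₀ (-p) = -(Ψ₀ p) := by
    intro p
    rw [hΨ₀def]
    simp only
    rw [hbb_neg, hsub_neg, hc_neg]
  have hΨzero : Ψ₀ 0 = 0 := by
    have hbb0 : bb 0 = 0 := by
      show Matrix.blockDiagonal ![(0 : Matrix (Fin (2^m)) (Fin (2^m)) ℂ), 0] = 0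
      rw [show (![(0 : Matrix (Fin (2^m)) (Fin (2^m)) ℂ), 0] :
        Fin 2 → Matrix (Fin (2^m)) (Fin (2^m)) ℂ) = 0 from by
          funext s'
          fin_cases s' <;> rfl]
      exact Matrix.blockDiagonal_zero
    show c (sub (bb 0)) = 0
    rw [hbb0]
    have hsub0 : sub 0 = 0 := by ext i j; simp [hsubdef]
    rw [hsub0]
    show W * 0 * W = 0
    rw [Matrix.mul_zero, Matrix.zero_mul]
  have hRC : ∀ (r : ℝ) (X : Matrix (Fin (m+1) → Fin 2) (Fin (m+1) → Fin 2) ℂ),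
      (r : ℂ) • X = r • X := by
    intro r X
    ext i j
    simp [Complex.real_smul]
  -- smul of P
  have hsmulP : ∀ r : ℝ, r • (Complex.I • P) =
      Ψ₀ (((r : ℂ) * Complex.I) • (1 : Matrix (Fin (2^m)) (Fin (2^m)) ℂ),
          -(((r : ℂ) * Complex.I) • (1 : Matrix (Fin (2^m)) (Fin (2^m)) ℂ))) := by
    intro r
    show r • (Complex.I • P) =
      c (sub (Matrix.blockDiagonal ![((r : ℂ) * Complex.I) • (1 : Matrix (Fin (2^m)) (Fin (2^m)) ℂ),
        -(((r : ℂ) * Complex.I) • (1 : Matrix (Fin (2^m)) (Fin (2^m)) ℂ))]))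
    rw [show (![((r : ℂ) * Complex.I) • (1 : Matrix (Fin (2^m)) (Fin (2^m)) ℂ),
        -(((r : ℂ) * Complex.I) • (1 : Matrix (Fin (2^m)) (Fin (2^m)) ℂ))] :
        Fin 2 → Matrix (Fin (2^m)) (Fin (2^m)) ℂ) =
        ((r : ℂ) * Complex.I) • ![1, -1] from by
      funext s'
      fin_cases s' <;> simp]
    rw [Matrix.blockDiagonal_smul, hsub_smul, hc_smul, ← hPc, ← smul_assoc, Complex.real_smul]
  -- build linear map
  refine ⟨{ toFun := Ψ₀
            map_add' := by
              intro p q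
              show c (sub (bb (p + q))) = c (sub (bb p)) + c (sub (bb q))
              rw [hbb_add, hsub_add, hc_add]
            map_smul' := by
              intro r p
              show c (sub (bb (r • p))) = r • c (sub (bb p))
              rw [hbb_smulR, hsub_smulR, hc_smulR] }, ?_, ?_, ?_⟩
  · -- bracket
    intro p q _ _ _ _
    show Ψ₀ ⁅p, q⁆ = ⁅Ψ₀ p, Ψ₀ q⁆
    have h1 : ⁅p, q⁆ = (p.1 * q.1 - q.1 * p.1, p.2 * q.2 - q.2 * p.2) := rfl
    have h2 : Ψ₀ (p.1 * q.1 - q.1 * p.1, p.2 * q.2 - q.2 * p.2)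
        = Ψ₀ (p.1 * q.1, p.2 * q.2) - Ψ₀ (q.1 * p.1, q.2 * p.2) := by
      rw [hΨ₀def]
      simp only
      have : ((p.1 * q.1 - q.1 * p.1, p.2 * q.2 - q.2 * p.2) :
          Matrix (Fin (2^m)) (Fin (2^m)) ℂ × Matrix (Fin (2^m)) (Fin (2^m)) ℂ)
          = (p.1 * q.1, p.2 * q.2) + (-(q.1 * p.1), -(q.2 * p.2)) := by
        apply Prod.ext <;> simp [sub_eq_add_neg]
      rw [this, hbb_add, hsub_add, hc_add]
      rw [show ((-(q.1 * p.1), -(q.2 * p.2)) :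
          Matrix (Fin (2^m)) (Fin (2^m)) ℂ × Matrix (Fin (2^m)) (Fin (2^m)) ℂ)
          = -((q.1 * p.1, q.2 * p.2)) from rfl]
      rw [hbb_neg, hsub_neg, hc_neg]
      abel
    rw [h1, h2, ← hΨmul, ← hΨmul, Ring.lie_def]
  · -- independence
    intro p t hp1 hp2 heq
    rw [hsmulP] at heq
    set cI : ℂ := (t : ℂ) * Complex.I with hcIdef
    have hsum : Ψ₀ p + Ψ₀ (cI • 1, -(cI • 1)) = Ψ₀ (p + (cI • 1, -(cI • 1))) := by
      show c (sub (bb p)) + c (sub (bb (cI • 1, -(cI • 1))))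
        = c (sub (bb (p + (cI • 1, -(cI • 1)))))
      rw [hbb_add, hsub_add, hc_add]
    have heq2 : Ψ₀ (p + (cI • 1, -(cI • 1))) = Ψ₀ 0 := by
      rw [← hsum, hΨzero]
      exact heq
    have hpq := hΨinj _ _ heq2
    have h1 : p.1 + cI • 1 = 0 := congrArg Prod.fst hpq
    have h2 : p.2 + -(cI • 1) = 0 := congrArg Prod.snd hpq
    have htr1 : p.1.trace + cI * (2^m : ℕ) = 0 := by
      have := congrArg Matrix.trace h1
      rwa [Matrix.trace_add, Matrix.trace_smul, Matrix.trace_one, Matrix.trace_zero,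
        _root_.smul_eq_mul, Fintype.card_fin] at this
    have hcI0 : cI = 0 := by
      rw [hp1.2, zero_add] at htr1
      have : ((2^m : ℕ) : ℂ) ≠ 0 := by
        simp [pow_ne_zero]
      exact (mul_eq_zero.mp htr1).resolve_right this
    have ht0 : t = 0 := by
      have : (t : ℂ) = 0 := by
        rcases mul_eq_zero.mp (hcIdef ▸ hcI0) with h | h
        · exact h
        · exact absurd h Complex.I_ne_zero
      exact_mod_cast this
    refine ⟨?_, ht0⟩
    have hp10 : p.1 = 0 := by
      rw [hcI0, zero_smul, add_zero] at h1
      exact h1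
    have hp20 : p.2 = 0 := by
      rw [hcI0, zero_smul, neg_zero, add_zero] at h2
      exact h2
    exact Prod.ext hp10 hp20
  · -- characterization
    intro M
    constructor
    · rintro ⟨⟨hMH, hMtr⟩, hcommPM⟩
      have hcP : c P = D := hWPW
      have hDM : D * c M = c M * D := by
        calc D * c M = c P * c M := by rw [hcP]
        _ = c (P * M) := hc_mul _ _
        _ = c (M * P) := by rw [hcommPM]
        _ = c M * c P := (hc_mul _ _).symm
        _ = c M * D := by rw [hcP]
      have hent : ∀ v w, χ v * (c M) v w = (c M) v w * χ w := by
        intro v w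
        rw [hDdiag] at hDM
        have h2 : (Matrix.diagonal χ * c M) v w = (c M * Matrix.diagonal χ) v w := by
          rw [hDM]
        rwa [Matrix.diagonal_mul, Matrix.mul_diagonal] at h2
      have hoff : ∀ (k k' : Fin (2^m)) (s s' : Fin 2), s ≠ s' →
          (c M) (ee (k, s)) (ee (k', s')) = 0 := by
        intro k k' s s' hss
        have h2 := hent (ee (k, s)) (ee (k', s'))
        rw [hχee, hχee] at h2
        have hzz : zc s ≠ zc s' := by
          fin_cases s <;> fin_cases s' <;>
            first
              | exact absurd rfl hss
              | norm_num [zc]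
        have h3 : (zc s - zc s') * (c M) (ee (k, s)) (ee (k', s')) = 0 := by
          linear_combination h2
        exact (mul_eq_zero.mp h3).resolve_left (sub_ne_zero.mpr hzz)
      set A : Matrix (Fin (2^m)) (Fin (2^m)) ℂ :=
        Matrix.of fun k k' => (c M) (ee (k, 0)) (ee (k', 0)) with hAdef
      set B : Matrix (Fin (2^m)) (Fin (2^m)) ℂ :=
        Matrix.of fun k k' => (c M) (ee (k, 1)) (ee (k', 1)) with hBdef
      have hblock : (c M).submatrix ee ee = bb (A, B) := by
        ext ⟨k, s⟩ ⟨k', s'⟩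
        rw [Matrix.submatrix_apply, hbbdef]
        simp only
        rw [Matrix.blockDiagonal_apply]
        by_cases hss : s = s'
        · subst hss
          rw [if_pos rfl]
          fin_cases s
          · simp only [Matrix.cons_val_zero]
            rfl
          · simp only [Matrix.cons_val_one, Matrix.head_cons]
            rfl
        · rw [if_neg hss]
          exact hoff k k' s s' hss
      have hMrec : M = Ψ₀ (A, B) := by
        rw [hΨ₀def]
        simp only
        rw [← hblock, hsub_undo, hc_c]
      have hcMH : (Ψ₀ (A, B))ᴴ = -(Ψ₀ (A, B)) := by
        rw [← hMrec]
        exact hMH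
      have hABskew : Aᴴ = -A ∧ Bᴴ = -B := by
        have h4 : Ψ₀ (Aᴴ, Bᴴ) = Ψ₀ (-(A, B)) := by
          rw [← (show (Ψ₀ (A, B))ᴴ = Ψ₀ (Aᴴ, Bᴴ) from hΨconj (A, B)), hcMH,
            ← hΨneg (A, B)]
        have h5 := hΨinj _ _ h4
        exact ⟨congrArg Prod.fst h5, congrArg Prod.snd h5⟩
      have htrAB : A.trace + B.trace = 0 := by
        rw [← hΨtrace (A, B), ← hMrec]
        exact hMtr
      have himA : A.trace = Complex.I * (A.trace).im := by
        have h1 : star A.trace = -A.trace := by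
          rw [← Matrix.trace_conjTranspose, hABskew.1, Matrix.trace_neg]
        have hre : (A.trace).re = 0 := by
          have h2 := congrArg Complex.re h1
          simp only [Complex.star_def, Complex.conj_re, Complex.neg_re] at h2
          linarith
        apply Complex.ext
        · simp [hre]
        · simp
      set t : ℝ := (A.trace).im / (2^m : ℝ) with htdef
      set cI : ℂ := (t : ℂ) * Complex.I with hcIdef
      have hpow : ((2^m : ℕ) : ℂ) = ((2^m : ℝ) : ℂ) := by push_cast; ring
      have hpowR : (2^m : ℝ) ≠ 0 := by positivity
      have h2c : ((2^m : ℝ) : ℂ) ≠ 0 := Complex.ofReal_ne_zero.mpr hpowR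
      have htrA : A.trace = cI * (2^m : ℕ) := by
        rw [himA, hcIdef, htdef, hpow]
        push_cast
        field_simp
      have hstarcI : star cI = -cI := by
        rw [hcIdef, show (star ((t : ℂ) * Complex.I)) = (starRingEnd ℂ) ((t : ℂ) * Complex.I)
          from rfl, _root_.map_mul, Complex.conj_ofReal, Complex.conj_I]
        ring
      refine ⟨(A - cI • 1, B + cI • 1), t, ⟨?_, ?_⟩, ⟨?_, ?_⟩, ?_⟩
      · show (A - cI • 1)ᴴ = -(A - cI • 1)
        rw [Matrix.conjTranspose_sub, hABskew.1, Matrix.conjTranspose_smul, hstarcI,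
          Matrix.conjTranspose_one]
        module
      · show (A - cI • 1).trace = 0
        rw [Matrix.trace_sub, Matrix.trace_smul, Matrix.trace_one, htrA, _root_.smul_eq_mul,
          Fintype.card_fin]
        ring
      · show (B + cI • 1)ᴴ = -(B + cI • 1)
        rw [Matrix.conjTranspose_add, hABskew.2, Matrix.conjTranspose_smul, hstarcI,
          Matrix.conjTranspose_one]
        module
      · show (B + cI • 1).trace = 0
        rw [Matrix.trace_add, Matrix.trace_smul, Matrix.trace_one, _root_.smul_eq_mul,
          Fintype.card_fin]
        have hB : B.trace = -(cI * (2^m : ℕ)) := by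
          rw [← htrA]
          linear_combination htrAB
        rw [hB]
        ring
      · show M = Ψ₀ (A - cI • 1, B + cI • 1) + t • (Complex.I • P)
        rw [hsmulP, ← hcIdef]
        have hsum2 : Ψ₀ (A - cI • 1, B + cI • 1) + Ψ₀ (cI • 1, -(cI • 1)) = Ψ₀ (A, B) := by
          show c (sub (bb (A - cI • 1, B + cI • 1))) + c (sub (bb (cI • 1, -(cI • 1))))
            = c (sub (bb (A, B)))
          rw [← hc_add, ← hsub_add, ← hbb_add,
            show ((A - cI • 1, B + cI • 1) : Matrix (Fin (2^m)) (Fin (2^m)) ℂ ×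
                Matrix (Fin (2^m)) (Fin (2^m)) ℂ) + (cI • 1, -(cI • 1)) = (A, B) from by
              refine Prod.ext ?_ ?_
              · show A - cI • 1 + cI • 1 = A
                abel
              · show B + cI • 1 + -(cI • 1) = B
                abel]
        rw [hsum2, ← hMrec]
    · rintro ⟨p, t, ⟨hp1H, hp1tr⟩, ⟨hp2H, hp2tr⟩, rfl⟩
      simp only [LinearMap.coe_mk, AddHom.coe_mk]
      rw [hsmulP]
      set cI : ℂ := (t : ℂ) * Complex.I with hcIdef
      have hsum : Ψ₀ p + Ψ₀ (cI • 1, -(cI • 1)) = Ψ₀ (p + (cI • 1, -(cI • 1))) := by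
        show c (sub (bb p)) + c (sub (bb (cI • 1, -(cI • 1))))
          = c (sub (bb (p + (cI • 1, -(cI • 1)))))
        rw [hbb_add, hsub_add, hc_add]
      rw [hsum]
      set pq : Matrix (Fin (2^m)) (Fin (2^m)) ℂ × Matrix (Fin (2^m)) (Fin (2^m)) ℂ :=
        p + (cI • 1, -(cI • 1)) with hpqdef
      have hstarcI : star cI = -cI := by
        rw [hcIdef, show (star ((t : ℂ) * Complex.I)) = (starRingEnd ℂ) ((t : ℂ) * Complex.I)
          from rfl, _root_.map_mul, Complex.conj_ofReal, Complex.conj_I]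
        ring
      have hpq1H : pq.1ᴴ = -pq.1 := by
        show (p.1 + cI • 1)ᴴ = -(p.1 + cI • 1)
        rw [Matrix.conjTranspose_add, hp1H, Matrix.conjTranspose_smul, hstarcI,
          Matrix.conjTranspose_one]
        module
      have hpq2H : pq.2ᴴ = -pq.2 := by
        show (p.2 + -(cI • 1))ᴴ = -(p.2 + -(cI • 1))
        rw [Matrix.conjTranspose_add, hp2H, Matrix.conjTranspose_neg,
          Matrix.conjTranspose_smul, hstarcI, Matrix.conjTranspose_one]
        module
      refine ⟨⟨?_, ?_⟩, ?_⟩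
      · rw [hΨconj]
        rw [show ((pq.1ᴴ, pq.2ᴴ) :
            Matrix (Fin (2^m)) (Fin (2^m)) ℂ × Matrix (Fin (2^m)) (Fin (2^m)) ℂ)
            = -pq from by apply Prod.ext; exact hpq1H; exact hpq2H]
        exact hΨneg pq
      · rw [hΨtrace]
        show (p.1 + cI • 1).trace + (p.2 + -(cI • 1)).trace = 0
        rw [Matrix.trace_add, Matrix.trace_add, Matrix.trace_neg, hp1tr, hp2tr]
        ring
      · -- commutation
        show P * Ψ₀ pq = Ψ₀ pq * P
        have hkey : Matrix.blockDiagonal ![(1 : Matrix (Fin (2^m)) (Fin (2^m)) ℂ), -1] * bb pq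
            = bb pq * Matrix.blockDiagonal ![(1 : Matrix (Fin (2^m)) (Fin (2^m)) ℂ), -1] := by
          show Matrix.blockDiagonal ![(1 : Matrix (Fin (2^m)) (Fin (2^m)) ℂ), -1] *
              Matrix.blockDiagonal ![pq.1, pq.2]
            = Matrix.blockDiagonal ![pq.1, pq.2] *
              Matrix.blockDiagonal ![(1 : Matrix (Fin (2^m)) (Fin (2^m)) ℂ), -1]
          rw [← Matrix.blockDiagonal_mul, ← Matrix.blockDiagonal_mul]
          refine congrArg Matrix.blockDiagonal ?_
          funext s'
          fin_cases s' <;> simp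
        rw [hPc]
        show c (sub (Matrix.blockDiagonal ![(1 : Matrix (Fin (2^m)) (Fin (2^m)) ℂ), -1])) *
            c (sub (bb pq))
          = c (sub (bb pq)) *
            c (sub (Matrix.blockDiagonal ![(1 : Matrix (Fin (2^m)) (Fin (2^m)) ℂ), -1]))
        rw [hc_mul, hc_mul, hsub_mul, hsub_mul, hkey]

end Part2

lemma pauli1_apply (a b : Fin 2) : pauli 1 a b = if b = a + 1 then 1 else 0 := by
  fin_cases a <;> fin_cases b <;> simp [pauli] <;> rfl

lemma pauli0_apply (a b : Fin 2) : pauli 0 a b = if b = a + 0 then 1 else 0 := by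
  fin_cases a <;> fin_cases b <;> simp [pauli, Matrix.one_apply] <;> rfl


lemma part1 (m : ℕ) :
    ∃ U : Matrix (Fin (m+1) → Fin 2) (Fin (m+1) → Fin 2) ℂ,
      U * Uᴴ = 1 ∧ Uᴴ * U = 1 ∧
      U * pauliString (fun j => if (j : ℕ) = 0 then 1 else 0) * Uᴴ =
        pauliString (fun _ : Fin (m+1) => (1 : Fin 4)) := by
  set L : (Fin (m+1) → Fin 2) → (Fin (m+1) → Fin 2) :=
    fun v j => if (j : ℕ) = 0 then v j else v j + v 0 with hLdef
  have hL0 : ∀ v, L v 0 = v 0 := by intro v; simp [hLdef]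
  have hLL : ∀ v, L (L v) = v := by
    intro v; funext j
    by_cases h : (j : ℕ) = 0
    · simp [hLdef, (Fin.ext h : j = 0)]
    · simp only [hLdef, h, if_false, hL0]
      exact fin2_add_add _ _
  set σ : (Fin (m+1) → Fin 2) → (Fin (m+1) → Fin 2) :=
    fun v j => v j + (if (j : ℕ) = 0 then 1 else 0) with hσdef
  have hcomm : ∀ v, L (σ v) = fun j => L v j + 1 := by
    intro v; funext j
    have hσ0 : σ v 0 = v 0 + 1 := by simp [hσdef]
    by_cases h : (j : ℕ) = 0
    · have hj : j = 0 := Fin.ext h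
      subst hj
      simp [hLdef, hσdef]
    · simp only [hLdef, hσdef, h, if_false, Fin.val_zero, if_true]
      rw [add_zero, add_assoc]
  have hfac : ∀ (j : Fin (m+1)) (a b : Fin 2),
      pauli (if (j : ℕ) = 0 then 1 else 0) a b
        = if b = a + (if (j : ℕ) = 0 then 1 else 0) then 1 else 0 := by
    intro j a b
    by_cases h : (j : ℕ) = 0 <;> simp [h, pauli1_apply, pauli0_apply]
  have hX1 : pauliString (fun j : Fin (m+1) => if (j : ℕ) = 0 then (1 : Fin 4) else 0)
      = Matrix.of fun v w => if w = σ v then 1 else 0 := by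
    ext v w
    simp only [pauliString, Matrix.of_apply, hfac]
    rw [Fintype.prod_boole]
    simp [hσdef, funext_iff]
  have hfac1 : ∀ (a b : Fin 2), pauli (1 : Fin 4) a b = if b = a + 1 then 1 else 0 :=
    pauli1_apply
  have hP : pauliString (fun _ : Fin (m+1) => (1 : Fin 4))
      = Matrix.of fun v w => if w = (fun j => v j + 1) then 1 else 0 := by
    ext v w
    simp only [pauliString, Matrix.of_apply, hfac1]
    rw [Fintype.prod_boole]
    simp [funext_iff]
  set U : Matrix (Fin (m+1) → Fin 2) (Fin (m+1) → Fin 2) ℂ :=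
    Matrix.of fun v w => if w = L v then 1 else 0 with hUdef
  have hiff : ∀ u w, (w = L u) = (u = L w) := by
    intro u w
    apply propext
    constructor
    · rintro rfl; rw [hLL]
    · rintro rfl; rw [hLL]
  have hUH : Uᴴ = U := by
    ext v w
    simp only [conjTranspose_apply, hUdef, Matrix.of_apply, hiff]
    simp [apply_ite (star : ℂ → ℂ)]
  have hmulU : ∀ A : Matrix (Fin (m+1) → Fin 2) (Fin (m+1) → Fin 2) ℂ,
      U * A = Matrix.of fun v w => A (L v) w := by
    intro A; ext v w
    simp [hUdef, Matrix.mul_apply]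
  have hUmul : ∀ A : Matrix (Fin (m+1) → Fin 2) (Fin (m+1) → Fin 2) ℂ,
      A * U = Matrix.of fun v w => A v (L w) := by
    intro A; ext v w
    simp only [hUdef, Matrix.mul_apply, Matrix.of_apply, ite_mul, one_mul, zero_mul, mul_ite,
      mul_one, mul_zero]
    rw [Finset.sum_eq_single (L w)]
    · rw [if_pos (hLL w).symm]
    · intro b _ hb
      rw [if_neg]
      intro hc
      exact hb (by rw [hc, hLL])
    · intro h
      exact absurd (Finset.mem_univ _) h
  have hUU : U * U = 1 := by
    rw [hmulU]
    ext v w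
    simp [hUdef, hLL, Matrix.one_apply, eq_comm]
  refine ⟨U, by rw [hUH]; exact hUU, by rw [hUH]; exact hUU, ?_⟩
  rw [hUH, hX1, hP, hUmul, hmulU]
  ext v w
  simp only [Matrix.of_apply]
  have key : L (σ (L v)) = fun j => v j + 1 := by
    rw [hcomm]; funext j; rw [hLL]
  congr 1
  apply propext
  constructor
  · intro h
    have h2 := congrArg L h
    rw [hLL, key] at h2
    exact h2
  · intro h
    rw [← key] at h
    rw [h, hLL]

/-- There is a unitary `U` with `U X₁ U† = X^{⊗n}`; consequently the centralizer of `X^{⊗n}`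
in `su(2ⁿ)`, modulo the span of `i·X^{⊗n}`, is isomorphic to `su(2^{n−1}) ⊕ su(2^{n−1})`:
there is a real-linear bracket-preserving map `Ψ` from pairs of `2^{n-1}`-matrices such that
every element of the centralizer decomposes uniquely as `Ψ(a,b) + t·i·X^{⊗n}` with
`a, b ∈ su(2^{n−1})`, `t ∈ ℝ`. -/
theorem conj_X1_to_Xall_and_centralizer (n : ℕ) (hn : 1 ≤ n) :
    (∃ U : Matrix (Fin n → Fin 2) (Fin n → Fin 2) ℂ,
        U * Uᴴ = 1 ∧ Uᴴ * U = 1 ∧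
        U * pauliString (fun j => if (j : ℕ) = 0 then 1 else 0) * Uᴴ =
          pauliString (fun _ : Fin n => (1 : Fin 4))) ∧
    (∃ Ψ : (Matrix (Fin (2 ^ (n - 1))) (Fin (2 ^ (n - 1))) ℂ ×
              Matrix (Fin (2 ^ (n - 1))) (Fin (2 ^ (n - 1))) ℂ) →ₗ[ℝ]
            Matrix (Fin n → Fin 2) (Fin n → Fin 2) ℂ,
      (∀ p q : Matrix (Fin (2 ^ (n - 1))) (Fin (2 ^ (n - 1))) ℂ ×
              Matrix (Fin (2 ^ (n - 1))) (Fin (2 ^ (n - 1))) ℂ,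
          (p.1ᴴ = -p.1 ∧ p.1.trace = 0) → (p.2ᴴ = -p.2 ∧ p.2.trace = 0) →
          (q.1ᴴ = -q.1 ∧ q.1.trace = 0) → (q.2ᴴ = -q.2 ∧ q.2.trace = 0) →
          Ψ ⁅p, q⁆ = ⁅Ψ p, Ψ q⁆) ∧
      (∀ (p : Matrix (Fin (2 ^ (n - 1))) (Fin (2 ^ (n - 1))) ℂ ×
              Matrix (Fin (2 ^ (n - 1))) (Fin (2 ^ (n - 1))) ℂ) (t : ℝ),
          (p.1ᴴ = -p.1 ∧ p.1.trace = 0) → (p.2ᴴ = -p.2 ∧ p.2.trace = 0) →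
          Ψ p + t • (Complex.I • pauliString (fun _ : Fin n => (1 : Fin 4))) = 0 →
          p = 0 ∧ t = 0) ∧
      (∀ m : Matrix (Fin n → Fin 2) (Fin n → Fin 2) ℂ,
          ((mᴴ = -m ∧ m.trace = 0) ∧
              pauliString (fun _ : Fin n => (1 : Fin 4)) * m =
                m * pauliString (fun _ : Fin n => (1 : Fin 4))) ↔
            ∃ (p : Matrix (Fin (2 ^ (n - 1))) (Fin (2 ^ (n - 1))) ℂ ×
                Matrix (Fin (2 ^ (n - 1))) (Fin (2 ^ (n - 1))) ℂ) (t : ℝ),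
              (p.1ᴴ = -p.1 ∧ p.1.trace = 0) ∧ (p.2ᴴ = -p.2 ∧ p.2.trace = 0) ∧
              m = Ψ p + t • (Complex.I • pauliString (fun _ : Fin n => (1 : Fin 4))))) := by
  obtain ⟨m, rfl⟩ : ∃ m, n = m + 1 := ⟨n - 1, (Nat.succ_pred_eq_of_pos hn).symm⟩
  exact ⟨part1 m, part2 m⟩
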